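/- arXiv:1901.06665 — 3 statements merged into one kernel-verified Lean document; each statement's English description precedes it below -/
import Mathlib

section
/- For all x₁, x₂, y₁, y₂, w₁, w₂ ∈ ℝ³ and S₁, S₂ ∈ 𝔰, the matrix commutator satisfies M(x₁,y₁,S₁,w₁)·M(x₂,y₂,S₂,w₂) − M(x₂,y₂,S₂,w₂)·M(x₁,y₁,S₁,w₁) = M(2·y₁×y₂ + S₁x₂ − S₂x₁ + w₁×x₂ + x₁×w₂, 2·x₁×x₂ + S₂y₁ − S₁y₂ + w₁×y₂ + y₁×w₂, 3·x₂⊙y₁ − 3·x₁⊙y₂ + [★⁻¹w₁, S₂] + [S₁, ★⁻¹w₂], (3/2)(x₁×y₂ + y₁×x₂) + ★[S₁,S₂] + w₁×w₂). In particular, the 14-dimensional image of M is a Lie subalgebra of the real 7×7 matrices under the commutator (the split real form 𝔤₂ˢ of the exceptional Lie algebra 𝔤₂). -/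
open Matrix

/-- The cross product on `ℝ³`. -/
def cross (x y : Fin 3 → ℝ) : Fin 3 → ℝ :=
  ![x 1 * y 2 - x 2 * y 1, x 2 * y 0 - x 0 * y 2, x 0 * y 1 - x 1 * y 0]

abbrev V3 := Fin 3 → ℝ

/-- The hat map `★⁻¹ : ℝ³ → so(3)`, with `(★⁻¹ v) u = v × u`. -/
def hat (v : V3) : Matrix (Fin 3) (Fin 3) ℝ :=
  Matrix.of ![![0, -v 2, v 1], ![v 2, 0, -v 0], ![-v 1, v 0, 0]]

/-- The map `★`, inverse of the hat map. -/
def starM (A : Matrix (Fin 3) (Fin 3) ℝ) : V3 := ![A 2 1, A 0 2, A 1 0]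

/-- The symmetrized traceless product `x ⊙ y`. -/
noncomputable def odot (x y : V3) : Matrix (Fin 3) (Fin 3) ℝ :=
  (1/2 : ℝ) • (vecMulVec y x + vecMulVec x y) - ((x ⬝ᵥ y) / 3) • (1 : Matrix (Fin 3) (Fin 3) ℝ)

/-- The matrix commutator. -/
def mcomm (A B : Matrix (Fin 3) (Fin 3) ℝ) : Matrix (Fin 3) (Fin 3) ℝ := A * B - B * A

/-- The linear map `M` sending `(x,y,S,w)` to the 7×7 block matrix with rows
`(0, −2yᵀ, −2xᵀ)`, `(x, S + ★⁻¹w, ★⁻¹y)`, `(y, ★⁻¹x, −S + ★⁻¹w)`, block sizes `1,3,3`. -/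
def M7 (x y : V3) (S : Matrix (Fin 3) (Fin 3) ℝ) (w : V3) :
    Matrix (Fin 1 ⊕ Fin 3 ⊕ Fin 3) (Fin 1 ⊕ Fin 3 ⊕ Fin 3) ℝ :=
  Matrix.of fun i j =>
    match i, j with
    | .inl _, .inl _ => 0
    | .inl _, .inr (.inl j) => -2 * y j
    | .inl _, .inr (.inr j) => -2 * x j
    | .inr (.inl i), .inl _ => x i
    | .inr (.inl i), .inr (.inl j) => (S + hat w) i j
    | .inr (.inl i), .inr (.inr j) => hat y i j
    | .inr (.inr i), .inl _ => y i
    | .inr (.inr i), .inr (.inl j) => hat x i j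
    | .inr (.inr i), .inr (.inr j) => (-S + hat w) i j

/-- The image of `M7` for symmetric traceless `S`: the split real form `𝔤₂ˢ` of the
exceptional Lie algebra `𝔤₂` inside the 7×7 real matrices. -/
def g2sSet : Set (Matrix (Fin 1 ⊕ Fin 3 ⊕ Fin 3) (Fin 1 ⊕ Fin 3 ⊕ Fin 3) ℝ) :=
  {A | ∃ (x y : V3) (S : Matrix (Fin 3) (Fin 3) ℝ) (w : V3),
    Sᵀ = S ∧ S.trace = 0 ∧ A = M7 x y S w}
lemma vmvT (x y : V3) : (vecMulVec x y)ᵀ = vecMulVec y x := by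
  ext i j; simp [Matrix.vecMulVec_apply, Matrix.transpose_apply, mul_comm]

lemma trace_vmv (x y : V3) : (vecMulVec x y).trace = x ⬝ᵥ y := by
  simp [Matrix.trace, Matrix.diag, Matrix.vecMulVec_apply, dotProduct]

lemma hatT (v : V3) : (hat v)ᵀ = -hat v := by
  ext i j; fin_cases i <;> fin_cases j <;> simp [hat]

lemma odotT (x y : V3) : (odot x y)ᵀ = odot x y := by
  unfold odot
  rw [Matrix.transpose_sub, Matrix.transpose_smul, Matrix.transpose_add, vmvT, vmvT,
    Matrix.transpose_smul, Matrix.transpose_one, add_comm (vecMulVec x y)]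

lemma odot_trace (x y : V3) : (odot x y).trace = 0 := by
  simp [odot, Matrix.trace_smul, trace_vmv, dotProduct_comm y x, smul_eq_mul]
  ring

lemma mcomm_trace (A B : Matrix (Fin 3) (Fin 3) ℝ) : (mcomm A B).trace = 0 := by
  simp [mcomm, Matrix.trace_sub, Matrix.trace_mul_comm A B]

lemma mcomm_hat_T (w : V3) (S : Matrix (Fin 3) (Fin 3) ℝ) (hS : Sᵀ = S) :
    (mcomm (hat w) S)ᵀ = mcomm (hat w) S := by
  simp [mcomm, Matrix.transpose_sub, Matrix.transpose_mul, hS, hatT]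
  abel

lemma mcomm_T_hat (w : V3) (S : Matrix (Fin 3) (Fin 3) ℝ) (hS : Sᵀ = S) :
    (mcomm S (hat w))ᵀ = mcomm S (hat w) := by
  simp [mcomm, Matrix.transpose_sub, Matrix.transpose_mul, hS, hatT]
  abel

set_option maxHeartbeats 16000000 in
/-- The commutator of `M(x₁,y₁,S₁,w₁)` and `M(x₂,y₂,S₂,w₂)` is again of the form
`M(⋯)`, with the stated components; in particular the 14-dimensional image of `M` is a
Lie subalgebra of the 7×7 real matrices (the split real form `𝔤₂ˢ`). -/
theorem stmt_13 :
    (∀ (x₁ x₂ y₁ y₂ w₁ w₂ : V3) (S₁ S₂ : Matrix (Fin 3) (Fin 3) ℝ),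
      S₁ᵀ = S₁ → S₁.trace = 0 → S₂ᵀ = S₂ → S₂.trace = 0 →
      M7 x₁ y₁ S₁ w₁ * M7 x₂ y₂ S₂ w₂ - M7 x₂ y₂ S₂ w₂ * M7 x₁ y₁ S₁ w₁
        = M7 ((2 : ℝ) • cross y₁ y₂ + S₁.mulVec x₂ - S₂.mulVec x₁ + cross w₁ x₂ + cross x₁ w₂)
            ((2 : ℝ) • cross x₁ x₂ + S₂.mulVec y₁ - S₁.mulVec y₂ + cross w₁ y₂ + cross y₁ w₂)
            ((3 : ℝ) • odot x₂ y₁ - (3 : ℝ) • odot x₁ y₂ + mcomm (hat w₁) S₂ + mcomm S₁ (hat w₂))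
            ((3 / 2 : ℝ) • (cross x₁ y₂ + cross y₁ x₂) + starM (mcomm S₁ S₂) + cross w₁ w₂))
    ∧ ∀ A B, A ∈ g2sSet → B ∈ g2sSet → A * B - B * A ∈ g2sSet := by
  have key : ∀ (x₁ x₂ y₁ y₂ w₁ w₂ : V3) (S₁ S₂ : Matrix (Fin 3) (Fin 3) ℝ),
      S₁ᵀ = S₁ → S₁.trace = 0 → S₂ᵀ = S₂ → S₂.trace = 0 →
      M7 x₁ y₁ S₁ w₁ * M7 x₂ y₂ S₂ w₂ - M7 x₂ y₂ S₂ w₂ * M7 x₁ y₁ S₁ w₁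
        = M7 ((2 : ℝ) • cross y₁ y₂ + S₁.mulVec x₂ - S₂.mulVec x₁ + cross w₁ x₂ + cross x₁ w₂)
            ((2 : ℝ) • cross x₁ x₂ + S₂.mulVec y₁ - S₁.mulVec y₂ + cross w₁ y₂ + cross y₁ w₂)
            ((3 : ℝ) • odot x₂ y₁ - (3 : ℝ) • odot x₁ y₂ + mcomm (hat w₁) S₂ + mcomm S₁ (hat w₂))
            ((3 / 2 : ℝ) • (cross x₁ y₂ + cross y₁ x₂) + starM (mcomm S₁ S₂) + cross w₁ w₂) := by
    intro x₁ x₂ y₁ y₂ w₁ w₂ S₁ S₂ hS₁ ht₁ hS₂ ht₂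
    have e1 : S₁ 1 0 = S₁ 0 1 := congrFun (congrFun hS₁ 0) 1
    have e2 : S₁ 2 0 = S₁ 0 2 := congrFun (congrFun hS₁ 0) 2
    have e3 : S₁ 2 1 = S₁ 1 2 := congrFun (congrFun hS₁ 1) 2
    have f1 : S₂ 1 0 = S₂ 0 1 := congrFun (congrFun hS₂ 0) 1
    have f2 : S₂ 2 0 = S₂ 0 2 := congrFun (congrFun hS₂ 0) 2
    have f3 : S₂ 2 1 = S₂ 1 2 := congrFun (congrFun hS₂ 1) 2
    simp only [Matrix.trace, Fin.sum_univ_three, Matrix.diag_apply] at ht₁ ht₂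
    have t1 : S₁ 2 2 = -S₁ 0 0 - S₁ 1 1 := by linarith
    have t2 : S₂ 2 2 = -S₂ 0 0 - S₂ 1 1 := by linarith
    ext i j
    rcases i with i | i | i <;> rcases j with j | j | j <;>
      fin_cases i <;> fin_cases j <;>
      · simp only [M7, mcomm, odot, hat, cross, starM, Matrix.sub_apply, Matrix.add_apply,
          Matrix.neg_apply, Matrix.smul_apply, Matrix.mul_apply, Matrix.of_apply,
          Matrix.one_fin_three, Matrix.vecMulVec_apply, Matrix.mulVec, dotProduct,
          Fintype.sum_sum_type, Fin.sum_univ_three, Fin.sum_univ_one, Finset.univ_unique,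
          Finset.sum_singleton, Pi.add_apply, Pi.sub_apply, Pi.smul_apply, smul_eq_mul,
          Matrix.cons_val_zero, Matrix.cons_val_one, Matrix.cons_val_two, Matrix.head_cons,
          Matrix.tail_cons, Matrix.cons_val', Matrix.empty_val', Matrix.cons_val_fin_one,
          Matrix.head_fin_const, Fin.isValue, Fin.mk_zero, Fin.mk_one, Fin.reduceFinMk]
        try simp only [e1, e2, e3, f1, f2, f3, t1, t2]
        ring
  refine ⟨key, ?_⟩
  rintro A B ⟨x₁, y₁, S₁, w₁, hS₁, ht₁, rfl⟩ ⟨x₂, y₂, S₂, w₂, hS₂, ht₂, rfl⟩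
  refine ⟨_, _, _, _, ?_, ?_, key x₁ x₂ y₁ y₂ w₁ w₂ S₁ S₂ hS₁ ht₁ hS₂ ht₂⟩
  · rw [Matrix.transpose_add, Matrix.transpose_add, Matrix.transpose_sub,
      Matrix.transpose_smul, Matrix.transpose_smul, odotT, odotT,
      mcomm_hat_T w₁ S₂ hS₂, mcomm_T_hat w₂ S₁ hS₁]
  · rw [Matrix.trace_add, Matrix.trace_add, Matrix.trace_sub, Matrix.trace_smul,
      Matrix.trace_smul, odot_trace, odot_trace, mcomm_trace, mcomm_trace]
    simp
end

section
/- Let c₁, …, c₉ ∈ ℝ and define an ℝ-bilinear skew-symmetric bracket on ℝ³ × ℝ³ × 𝔰 × ℝ³ by [(x₁,y₁,S₁,w₁),(x₂,y₂,S₂,w₂)] = (c₅(x₁×y₂ + y₁×x₂) + c₆(S₂y₁ − S₁y₂) + x₁×w₂ + w₁×x₂, x₁×x₂ + c₁·y₁×y₂ + c₃·★[S₁,S₂] + c₈(S₂x₁ − S₁x₂) + y₁×w₂ + w₁×y₂, x₁⊙y₂ − y₁⊙x₂ + c₇([★⁻¹y₁,S₂] − [★⁻¹y₂,S₁]) + [S₁,★⁻¹w₂]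 − [S₂,★⁻¹w₁], c₂·y₁×y₂ + c₄·★[S₁,S₂] + c₉(S₂x₁ − S₁x₂) + w₁×w₂). If this bracket satisfies the Jacobi identity, then, setting κ := c₅/7, one has c₁ = 2κ, c₂ = 15κ², c₃ = 0, c₄ = −144κ³, c₅ = 7κ, c₆ = 24κ², c₇ = 3κ, c₈ = −6κ, and c₉ = 18κ². -/
open Matrix

/-- The underlying space `ℝ³ × ℝ³ × 𝔰 × ℝ³` (with `𝔰` realized inside all 3×3 matrices). -/
abbrev A14 := V3 × V3 × Matrix (Fin 3) (Fin 3) ℝ × V3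

/-- Membership of an element of `A14` in `𝔤(κ) = ℝ³ × ℝ³ × 𝔰 × ℝ³`: the third component
must be symmetric and traceless. -/
def inA (u : A14) : Prop := u.2.2.1ᵀ = u.2.2.1 ∧ u.2.2.1.trace = 0

/-- The general `O(3)`-equivariant candidate bracket on `ℝ³ × ℝ³ × 𝔰 × ℝ³` with
constants `c₁, …, c₉`. -/
noncomputable def cBracket (c₁ c₂ c₃ c₄ c₅ c₆ c₇ c₈ c₉ : ℝ) (u v : A14) : A14 :=
  let x₁ := u.1; let y₁ := u.2.1; let S₁ := u.2.2.1; let w₁ := u.2.2.2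
  let x₂ := v.1; let y₂ := v.2.1; let S₂ := v.2.2.1; let w₂ := v.2.2.2
  ( c₅ • (cross x₁ y₂ + cross y₁ x₂) + c₆ • (S₂.mulVec y₁ - S₁.mulVec y₂)
      + cross x₁ w₂ + cross w₁ x₂,
    cross x₁ x₂ + c₁ • cross y₁ y₂ + c₃ • starM (mcomm S₁ S₂)
      + c₈ • (S₂.mulVec x₁ - S₁.mulVec x₂) + cross y₁ w₂ + cross w₁ y₂,
    odot x₁ y₂ - odot y₁ x₂ + c₇ • (mcomm (hat y₁) S₂ - mcomm (hat y₂) S₁)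
      + mcomm S₁ (hat w₂) - mcomm S₂ (hat w₁),
    c₂ • cross y₁ y₂ + c₄ • starM (mcomm S₁ S₂) + c₉ • (S₂.mulVec x₁ - S₁.mulVec x₂)
      + cross w₁ w₂ )

namespace Stmt16Aux

noncomputable def eX0 : A14 := (![1,0,0], 0, 0, 0)
noncomputable def eX1 : A14 := (![0,1,0], 0, 0, 0)
noncomputable def eY0 : A14 := (0, ![1,0,0], 0, 0)
noncomputable def eY1 : A14 := (0, ![0,1,0], 0, 0)
noncomputable def eS02 : A14 := (0, 0, Matrix.of ![![0,0,1],![0,0,0],![1,0,0]], 0)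
noncomputable def eS01 : A14 := (0, 0, Matrix.of ![![0,1,0],![1,0,0],![0,0,0]], 0)
noncomputable def eS12 : A14 := (0, 0, Matrix.of ![![0,0,0],![0,0,1],![0,1,0]], 0)
noncomputable def eD0 : A14 := (0, 0, Matrix.of ![![1,0,0],![0,-1,0],![0,0,0]], 0)
noncomputable def eD1 : A14 := (0, 0, Matrix.of ![![0,0,0],![0,1,0],![0,0,-1]], 0)

lemma inA_X0 : inA eX0 := by constructor <;> simp [eX0, inA]
lemma inA_X1 : inA eX1 := by constructor <;> simp [eX1, inA]
lemma inA_Y0 : inA eY0 := by constructor <;> simp [eY0, inA]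
lemma inA_Y1 : inA eY1 := by constructor <;> simp [eY1, inA]
lemma inA_S01 : inA eS01 := by
  constructor
  · ext i j; fin_cases i <;> fin_cases j <;> simp [eS01, inA, Matrix.vecHead, Matrix.vecTail]
  · simp [eS01, inA, Matrix.trace, Fin.sum_univ_three, Matrix.vecHead, Matrix.vecTail]
lemma inA_S02 : inA eS02 := by
  constructor
  · ext i j; fin_cases i <;> fin_cases j <;> simp [eS02, inA, Matrix.vecHead, Matrix.vecTail]
  · simp [eS02, inA, Matrix.trace, Fin.sum_univ_three, Matrix.vecHead, Matrix.vecTail]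
lemma inA_S12 : inA eS12 := by
  constructor
  · ext i j; fin_cases i <;> fin_cases j <;> simp [eS12, inA, Matrix.vecHead, Matrix.vecTail]
  · simp [eS12, inA, Matrix.trace, Fin.sum_univ_three, Matrix.vecHead, Matrix.vecTail]
lemma inA_D0 : inA eD0 := by
  constructor
  · ext i j; fin_cases i <;> fin_cases j <;> simp [eD0, inA, Matrix.vecHead, Matrix.vecTail]
  · simp [eD0, inA, Matrix.trace, Fin.sum_univ_three, Matrix.vecHead, Matrix.vecTail]
lemma inA_D1 : inA eD1 := by
  constructor
  · ext i j; fin_cases i <;> fin_cases j <;> simp [eD1, inA, Matrix.vecHead, Matrix.vecTail]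
  · simp [eD1, inA, Matrix.trace, Fin.sum_univ_three, Matrix.vecHead, Matrix.vecTail]

end Stmt16Aux

set_option maxHeartbeats 4000000 in
/-- If the candidate bracket satisfies the Jacobi identity on `ℝ³ × ℝ³ × 𝔰 × ℝ³`, then
with `κ := c₅/7` one has `c₁ = 2κ, c₂ = 15κ², c₃ = 0, c₄ = −144κ³, c₅ = 7κ, c₆ = 24κ²,
c₇ = 3κ, c₈ = −6κ, c₉ = 18κ²`. -/
theorem stmt_16 (c₁ c₂ c₃ c₄ c₅ c₆ c₇ c₈ c₉ : ℝ)
    (hJ : ∀ u v w : A14, inA u → inA v → inA w →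
      cBracket c₁ c₂ c₃ c₄ c₅ c₆ c₇ c₈ c₉ (cBracket c₁ c₂ c₃ c₄ c₅ c₆ c₇ c₈ c₉ u v) w
        + cBracket c₁ c₂ c₃ c₄ c₅ c₆ c₇ c₈ c₉ (cBracket c₁ c₂ c₃ c₄ c₅ c₆ c₇ c₈ c₉ v w) u
        + cBracket c₁ c₂ c₃ c₄ c₅ c₆ c₇ c₈ c₉ (cBracket c₁ c₂ c₃ c₄ c₅ c₆ c₇ c₈ c₉ w u) v
        = 0) :
    c₁ = 2 * (c₅ / 7) ∧ c₂ = 15 * (c₅ / 7) ^ 2 ∧ c₃ = 0 ∧ c₄ = -144 * (c₅ / 7) ^ 3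
      ∧ c₅ = 7 * (c₅ / 7) ∧ c₆ = 24 * (c₅ / 7) ^ 2 ∧ c₇ = 3 * (c₅ / 7)
      ∧ c₈ = -6 * (c₅ / 7) ∧ c₉ = 18 * (c₅ / 7) ^ 2 := by
    classical
  open Stmt16Aux in
  have h1 := congrArg (fun p : A14 => p.2.1 1) (hJ eX0 eX1 eY0 inA_X0 inA_X1 inA_Y0)
  open Stmt16Aux in
  have h2 := congrArg (fun p : A14 => p.2.2.2 1) (hJ eX0 eX1 eY0 inA_X0 inA_X1 inA_Y0)
  open Stmt16Aux in
  have h3 := congrArg (fun p : A14 => p.2.2.1 0 0) (hJ eX0 eX1 eS01 inA_X0 inA_X1 inA_S01)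
  open Stmt16Aux in
  have h4 := congrArg (fun p : A14 => p.1 0) (hJ eX0 eX1 eS02 inA_X0 inA_X1 inA_S02)
  open Stmt16Aux in
  have h5 := congrArg (fun p : A14 => p.2.2.1 0 2) (hJ eX0 eY0 eY1 inA_X0 inA_Y0 inA_Y1)
  open Stmt16Aux in
  have h6 := congrArg (fun p : A14 => p.2.2.1 1 2) (hJ eX0 eD0 eD1 inA_X0 inA_D0 inA_D1)
  open Stmt16Aux in
  have h7 := congrArg (fun p : A14 => p.2.2.1 0 0) (hJ eX0 eS12 eD0 inA_X0 inA_S12 inA_D0)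
  open Stmt16Aux in
  have h8 := congrArg (fun p : A14 => p.2.2.2 1) (hJ eX0 eY1 eS12 inA_X0 inA_Y1 inA_S12)
  simp only [cBracket, Stmt16Aux.eX0, Stmt16Aux.eX1, Stmt16Aux.eY0, Stmt16Aux.eY1,
    Stmt16Aux.eS01, Stmt16Aux.eS02, Stmt16Aux.eS12, Stmt16Aux.eD0, Stmt16Aux.eD1,
    cross, hat, starM, odot, mcomm, inA,
    Matrix.mulVec, Matrix.mul_apply, Matrix.vecMulVec_apply, Matrix.one_apply,
    dotProduct, Fin.sum_univ_three, Matrix.smul_apply, Matrix.add_apply, Matrix.sub_apply,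
    Matrix.of_apply, Matrix.cons_val', Matrix.cons_val_zero, Matrix.cons_val_one,
    Matrix.head_cons, Matrix.head_fin_const, Matrix.cons_val_fin_one, Matrix.empty_val',
    Pi.add_apply, Pi.sub_apply, Pi.smul_apply, Pi.zero_apply, Prod.fst_add, Prod.snd_add,
    Matrix.zero_apply, Prod.fst_zero, Prod.snd_zero, smul_eq_mul,
    Matrix.cons_val_two, Matrix.tail_cons] at h1 h2 h3 h4 h5 h6 h7 h8
  norm_num at h1 h2 h3 h4 h5 h6 h7 h8
  have hc7 : c₇ = 3 * (c₅ / 7) := by linarith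
  have hc8 : c₈ = -6 * (c₅ / 7) := by linarith
  have hc1 : c₁ = 2 * (c₅ / 7) := by linarith
  have hc9 : c₉ = 18 * (c₅ / 7) ^ 2 := by
    linear_combination (1/2) * h6 - c₈ * hc7 - 3 * (c₅/7) * hc8
  have hc2 : c₂ = 15 * (c₅ / 7) ^ 2 := by linear_combination h2 + (5/6) * hc9
  have hc6 : c₆ = 24 * (c₅ / 7) ^ 2 := by linear_combination h4 - c₅ * hc8 - hc9
  have hc3 : c₃ = 0 := by linarith
  have hc4 : c₄ = -144 * (c₅ / 7) ^ 3 := by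
    linear_combination 2 * h8 - 2 * (c₅ - c₇) * hc9 + 36 * (c₅/7)^2 * hc7
  exact ⟨hc1, hc2, hc3, hc4, by ring, hc6, hc7, hc8, hc9⟩
end

section
/- Let a > 0 and κ = a². Then the real-linear map φ : 𝔤(κ) → su(3) × ℂ³ defined by φ(x,y,S,w) = (12a³·(i·S) + ★⁻¹(w + 3a²·y), −2a²·y + i·a·x), where real vectors and matrices are regarded as complex ones, is bijective and satisfies φ([u,v]) = [φ(u), φ(v)] for all u, v ∈ 𝔤(κ), where the target carries the bracket of 𝔤₂ᶜ. Hence, for κ > 0, 𝔤(κ) is isomorphic to the compact real form 𝔤₂ᶜ of the exceptional Lie algebra 𝔤₂. -/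
open Matrix

/-- The bracket of `𝔤(κ)`, the Lie algebra of the isometry group of the sub-Riemannian
model space `𝖠₃,₃(κ)`. -/
noncomputable def aBracket (κ : ℝ) (u v : A14) : A14 :=
  let x₁ := u.1; let y₁ := u.2.1; let S₁ := u.2.2.1; let w₁ := u.2.2.2
  let x₂ := v.1; let y₂ := v.2.1; let S₂ := v.2.2.1; let w₂ := v.2.2.2
  ( (7 * κ) • (cross x₁ y₂ + cross y₁ x₂) + (24 * κ ^ 2) • (S₂.mulVec y₁ - S₁.mulVec y₂)
      + cross x₁ w₂ + cross w₁ x₂,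
    cross x₁ x₂ + (2 * κ) • cross y₁ y₂ + (6 * κ) • (S₁.mulVec x₂ - S₂.mulVec x₁)
      + cross y₁ w₂ + cross w₁ y₂,
    odot x₁ y₂ - odot y₁ x₂ + (3 * κ) • (mcomm (hat y₁) S₂ - mcomm (hat y₂) S₁)
      + mcomm S₁ (hat w₂) - mcomm S₂ (hat w₁),
    (15 * κ ^ 2) • cross y₁ y₂ - (144 * κ ^ 3) • starM (mcomm S₁ S₂)
      + (18 * κ ^ 2) • (S₂.mulVec x₁ - S₁.mulVec x₂) + cross w₁ w₂ )

/-- The ℂ-bilinear extension of the cross product to `ℂ³`. -/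
def crossC (x y : Fin 3 → ℂ) : Fin 3 → ℂ :=
  ![x 1 * y 2 - x 2 * y 1, x 2 * y 0 - x 0 * y 2, x 0 * y 1 - x 1 * y 0]

/-- The bracket of `𝔤₂ᶜ` on `su(3) × ℂ³` (written on all of `Matrix(3,3,ℂ) × ℂ³`):
`[(A₁,v₁),(A₂,v₂)] = (A₁A₂ − A₂A₁ + 3(v₂v₁* − v₁v₂*) − (v₁*v₂ − v₂*v₁)·I₃,
A₁v₂ − A₂v₁ + 2·(conj v₁) × (conj v₂))`. -/
noncomputable def g2cBracket (u v : Matrix (Fin 3) (Fin 3) ℂ × (Fin 3 → ℂ)) :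
    Matrix (Fin 3) (Fin 3) ℂ × (Fin 3 → ℂ) :=
  ( u.1 * v.1 - v.1 * u.1
      + (3 : ℂ) • (vecMulVec v.2 (star u.2) - vecMulVec u.2 (star v.2))
      - ((star u.2 ⬝ᵥ v.2) - (star v.2 ⬝ᵥ u.2)) • (1 : Matrix (Fin 3) (Fin 3) ℂ),
    u.1.mulVec v.2 - v.1.mulVec u.2 + (2 : ℂ) • crossC (star u.2) (star v.2) )

/-- A real vector regarded as an element of `ℂ³`. -/
def cv (x : V3) : Fin 3 → ℂ := fun i => (x i : ℂ)

/-- A real matrix regarded as a complex matrix. -/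
def cM (S : Matrix (Fin 3) (Fin 3) ℝ) : Matrix (Fin 3) (Fin 3) ℂ :=
  S.map Complex.ofReal

/-- The complex hat map `★⁻¹ : ℂ³ → Matrix(3,3,ℂ)`. -/
def hatC (v : Fin 3 → ℂ) : Matrix (Fin 3) (Fin 3) ℂ :=
  Matrix.of ![![0, -v 2, v 1], ![v 2, 0, -v 0], ![-v 1, v 0, 0]]

/-- The map `φ : 𝔤(a²) → su(3) × ℂ³`,
`φ(x,y,S,w) = (12a³·(i·S) + ★⁻¹(w + 3a²·y), −2a²·y + i·a·x)`. -/
noncomputable def phi17 (a : ℝ) (u : A14) : Matrix (Fin 3) (Fin 3) ℂ × (Fin 3 → ℂ) :=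
  ( ((12 * a ^ 3 : ℝ) : ℂ) • (Complex.I • cM u.2.2.1) + hatC (cv (u.2.2.2 + (3 * a ^ 2) • u.2.1)),
    ((-(2 * a ^ 2) : ℝ) : ℂ) • cv u.2.1 + (Complex.I * (a : ℂ)) • cv u.1 )
lemma mulVec3 (A : Matrix (Fin 3) (Fin 3) ℂ) (x : Fin 3 → ℂ) (i : Fin 3) :
    (A *ᵥ x) i = A i 0 * x 0 + A i 1 * x 1 + A i 2 * x 2 := by
  simp [Matrix.mulVec, dotProduct, Fin.sum_univ_three]

lemma mulVec3R (A : Matrix (Fin 3) (Fin 3) ℝ) (x : Fin 3 → ℝ) (i : Fin 3) :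
    (A *ᵥ x) i = A i 0 * x 0 + A i 1 * x 1 + A i 2 * x 2 := by
  simp [Matrix.mulVec, dotProduct, Fin.sum_univ_three]

lemma mul3 (A B : Matrix (Fin 3) (Fin 3) ℂ) (i j : Fin 3) :
    (A * B) i j = A i 0 * B 0 j + A i 1 * B 1 j + A i 2 * B 2 j := by
  simp [Matrix.mul_apply, Fin.sum_univ_three]

lemma mul3R (A B : Matrix (Fin 3) (Fin 3) ℝ) (i j : Fin 3) :
    (A * B) i j = A i 0 * B 0 j + A i 1 * B 1 j + A i 2 * B 2 j := by
  simp [Matrix.mul_apply, Fin.sum_univ_three]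

lemma half_re17 : ((1:ℂ)/2).re = 1/2 := by norm_num
lemma half_im17 : ((1:ℂ)/2).im = 0 := by norm_num
lemma inv2_re17 : ((2:ℂ)⁻¹).re = 1/2 := by norm_num
lemma inv2_im17 : ((2:ℂ)⁻¹).im = 0 := by norm_num
lemma inv3_re17 : ((3:ℂ)⁻¹).re = 1/3 := by norm_num
lemma inv3_im17 : ((3:ℂ)⁻¹).im = 0 := by norm_num

lemma vecMul3 (x : Fin 3 → ℂ) (A : Matrix (Fin 3) (Fin 3) ℂ) (i : Fin 3) :
    (x ᵥ* A) i = x 0 * A 0 i + x 1 * A 1 i + x 2 * A 2 i := by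
  simp [Matrix.vecMul, dotProduct, Fin.sum_univ_three]

lemma vecMul3R (x : Fin 3 → ℝ) (A : Matrix (Fin 3) (Fin 3) ℝ) (i : Fin 3) :
    (x ᵥ* A) i = x 0 * A 0 i + x 1 * A 1 i + x 2 * A 2 i := by
  simp [Matrix.vecMul, dotProduct, Fin.sum_univ_three]

/-- Inverse of `phi17`. -/
noncomputable def psi17 (a : ℝ) (p : Matrix (Fin 3) (Fin 3) ℂ × (Fin 3 → ℂ)) : A14 :=
  ( fun i => (p.2 i).im / a,
    fun i => -(p.2 i).re / (2 * a ^ 2),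
    Matrix.of fun i j => (p.1 i j).im / (12 * a ^ 3),
    fun i => starM (Matrix.of fun i j => (p.1 i j).re) i + 3 * (p.2 i).re / 2 )

set_option maxHeartbeats 4000000 in
lemma psi_phi (a : ℝ) (ha : a ≠ 0) (u : A14) : psi17 a (phi17 a u) = u := by
  obtain ⟨x, y, S, w⟩ := u
  refine Prod.ext ?_ (Prod.ext ?_ (Prod.ext ?_ ?_))
  · funext i
    fin_cases i <;>
    · simp [psi17, phi17, cv, cM, hatC]
      simp only [← Complex.ofReal_pow, Complex.ofReal_re, Complex.ofReal_im]
      try norm_num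
      try field_simp
      try ring
  · funext i
    fin_cases i <;>
    · simp [psi17, phi17, cv, cM, hatC]
      simp only [← Complex.ofReal_pow, Complex.ofReal_re, Complex.ofReal_im]
      try norm_num
      try field_simp
      try ring
  · ext i j
    fin_cases i <;> fin_cases j <;>
    · simp [psi17, phi17, cv, cM, hatC]
      simp only [← Complex.ofReal_pow, Complex.ofReal_re, Complex.ofReal_im]
      try norm_num
      try field_simp
      try ring
  · funext i
    fin_cases i <;>
    · simp [psi17, phi17, cv, cM, hatC, starM]
      simp only [← Complex.ofReal_pow, Complex.ofReal_re, Complex.ofReal_im]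
      try norm_num
      try field_simp
      try ring

set_option maxHeartbeats 10000000 in
/-- For `a > 0` and `κ = a²`, the map `φ` is a bijection from `𝔤(κ)` onto `su(3) × ℂ³`
intertwining the bracket of `𝔤(κ)` with that of `𝔤₂ᶜ`: for `κ > 0`, `𝔤(κ)` is isomorphic
to the compact real form `𝔤₂ᶜ` of the exceptional Lie algebra `𝔤₂`. -/
theorem stmt_17 (a : ℝ) (ha : 0 < a) :
    Set.BijOn (phi17 a) {u : A14 | inA u}
      {p : Matrix (Fin 3) (Fin 3) ℂ × (Fin 3 → ℂ) | p.1ᴴ = -p.1 ∧ p.1.trace = 0}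
    ∧ ∀ u v : A14, inA u → inA v →
        phi17 a (aBracket (a ^ 2) u v) = g2cBracket (phi17 a u) (phi17 a v) := by
  have ha' : a ≠ 0 := ne_of_gt ha
  constructor
  · refine ⟨?_, ?_, ?_⟩
    · -- MapsTo
      rintro ⟨x, y, S, w⟩ ⟨hs, ht⟩
      have e1 : S 1 0 = S 0 1 := congrFun (congrFun hs 0) 1
      have e2 : S 2 0 = S 0 2 := congrFun (congrFun hs 0) 2
      have e3 : S 2 1 = S 1 2 := congrFun (congrFun hs 1) 2
      have t1 : (S 0 0 : ℂ) + S 1 1 + S 2 2 = 0 := by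
        have : S 0 0 + S 1 1 + S 2 2 = 0 := by simpa [Matrix.trace_fin_three] using ht
        exact_mod_cast congrArg (Complex.ofReal) this
      constructor
      · ext i j
        fin_cases i <;> fin_cases j <;>
        · simp [phi17, cv, cM, hatC, Matrix.conjTranspose_apply, Complex.ext_iff, e1, e2, e3]
          try constructor <;> ring
      · rw [Matrix.trace_fin_three]
        simp only [phi17, cv, cM, hatC, Matrix.add_apply, Matrix.smul_apply, Matrix.map_apply,
          Matrix.of_apply, Matrix.cons_val_zero, Matrix.cons_val_one, Matrix.head_cons,
          Matrix.cons_val_two, Matrix.tail_cons, smul_eq_mul]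
        push_cast
        linear_combination (12 * (a:ℂ) ^ 3) * Complex.I * t1
    · -- InjOn
      intro u hu v hv h
      have := congrArg (psi17 a) h
      rwa [psi_phi a ha' u, psi_phi a ha' v] at this
    · -- SurjOn
      rintro ⟨P, q⟩ ⟨hP, htr⟩
      have hsk : ∀ i j, (starRingEnd ℂ) (P j i) = -(P i j) := by
        intro i j
        have := congrFun (congrFun hP i) j
        simpa [Matrix.conjTranspose_apply] using this
      have hre : ∀ i j, (P j i).re = -(P i j).re := fun i j => by
        have := congrArg Complex.re (hsk i j); simpa using this
      have him : ∀ i j, (P j i).im = (P i j).im := fun i j => by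
        have := congrArg Complex.im (hsk i j); simpa using this
      have hre0 : ∀ i, (P i i).re = 0 := fun i => by have := hre i i; linarith
      have htrIm : (P 0 0).im + (P 1 1).im + (P 2 2).im = 0 := by
        have := congrArg Complex.im htr
        simpa [Matrix.trace_fin_three] using this
      refine ⟨psi17 a (P, q), ⟨?_, ?_⟩, ?_⟩
      · ext i j
        simp [psi17, Matrix.transpose_apply, him i j]
      · simp [psi17, Matrix.trace_fin_three]
        field_simp
        linarith [htrIm]
      · refine Prod.ext ?_ ?_
        · ext i j
          fin_cases i <;> fin_cases j <;>
          · simp [phi17, psi17, cv, cM, hatC, starM, -Complex.ext_iff, -Complex.ofReal_div]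
            rw [Complex.ext_iff]
            constructor <;>
            · simp only [Complex.add_re, Complex.add_im, Complex.sub_re, Complex.sub_im,
                Complex.neg_re, Complex.neg_im, Complex.mul_re, Complex.mul_im, Complex.I_re,
                Complex.I_im, Complex.ofReal_re, Complex.ofReal_im, Complex.re_ofNat,
                Complex.im_ofNat, Complex.one_re, Complex.one_im, Complex.zero_re, Complex.zero_im]
              simp only [← Complex.ofReal_pow, ← Complex.ofReal_mul, ← Complex.ofReal_div,
                Complex.ofReal_re, Complex.ofReal_im]
              try simp only [hre 0 1, hre 0 2, hre 1 2, hre0 0, hre0 1, hre0 2]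
              try field_simp
              try ring
        · funext i
          fin_cases i <;>
          · simp [phi17, psi17, cv, cM, -Complex.ext_iff, -Complex.ofReal_div]
            rw [Complex.ext_iff]
            constructor <;>
            · simp only [Complex.add_re, Complex.add_im, Complex.sub_re, Complex.sub_im,
                Complex.neg_re, Complex.neg_im, Complex.mul_re, Complex.mul_im, Complex.I_re,
                Complex.I_im, Complex.ofReal_re, Complex.ofReal_im, Complex.re_ofNat,
                Complex.im_ofNat, Complex.one_re, Complex.one_im, Complex.zero_re, Complex.zero_im]
              simp only [← Complex.ofReal_pow, ← Complex.ofReal_mul, ← Complex.ofReal_div,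
                Complex.ofReal_re, Complex.ofReal_im]
              try field_simp
              try ring
  · -- bracket
    rintro ⟨x1, y1, S1, w1⟩ ⟨x2, y2, S2, w2⟩ ⟨hs1, ht1⟩ ⟨hs2, ht2⟩
    have e1 : S1 1 0 = S1 0 1 := congrFun (congrFun hs1 0) 1
    have e2 : S1 2 0 = S1 0 2 := congrFun (congrFun hs1 0) 2
    have e3 : S1 2 1 = S1 1 2 := congrFun (congrFun hs1 1) 2
    have f1 : S2 1 0 = S2 0 1 := congrFun (congrFun hs2 0) 1
    have f2 : S2 2 0 = S2 0 2 := congrFun (congrFun hs2 0) 2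
    have f3 : S2 2 1 = S2 1 2 := congrFun (congrFun hs2 1) 2
    have t1 : S1 2 2 = -S1 0 0 - S1 1 1 := by
      have := ht1; simp [Matrix.trace_fin_three] at this; linarith
    have t2 : S2 2 2 = -S2 0 0 - S2 1 1 := by
      have := ht2; simp [Matrix.trace_fin_three] at this; linarith
    refine Prod.ext ?_ ?_
    · ext i j
      fin_cases i <;> fin_cases j <;>
      · simp [phi17, aBracket, g2cBracket, cross, crossC, cv, cM, mulVec3, mulVec3R, mul3, mul3R, vecMul3, vecMul3R,
          odot, mcomm, hat, starM, Matrix.vecMulVec_apply, dotProduct, Fin.sum_univ_three,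
          Matrix.vecHead, Matrix.vecTail, hatC, Matrix.smul_apply, Matrix.add_apply,
          Matrix.sub_apply, Matrix.map_apply, Matrix.of_apply, Matrix.cons_val_zero,
          Matrix.cons_val_one, Matrix.head_cons, Matrix.cons_val_two, Matrix.tail_cons,
          Matrix.one_apply, Complex.star_def, _root_.map_mul,
          Complex.conj_ofReal, Complex.conj_I, smul_eq_mul, Complex.ofReal_mul, Complex.ofReal_add,
          Complex.ofReal_sub, Complex.ofReal_neg, Complex.ofReal_pow, Complex.ofReal_ofNat,
          -Complex.ext_iff]
        simp only [← Complex.ofReal_pow]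
        rw [Complex.ext_iff]
        constructor <;>
        · simp only [Complex.add_re, Complex.add_im, Complex.sub_re, Complex.sub_im,
            Complex.neg_re, Complex.neg_im, Complex.mul_re, Complex.mul_im, Complex.I_re,
            Complex.I_im, Complex.ofReal_re, Complex.ofReal_im, Complex.re_ofNat,
            Complex.im_ofNat, Complex.one_re, Complex.one_im, Complex.zero_re, Complex.zero_im,
            Complex.div_re, Complex.div_im, Complex.normSq_ofNat, half_re17, half_im17, inv2_re17, inv2_im17, inv3_re17, inv3_im17]
          try simp only [e1, e2, e3, f1, f2, f3, t1, t2]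
          ring
    · funext i
      fin_cases i <;>
      · simp [phi17, aBracket, g2cBracket, cross, crossC, cv, cM, mulVec3, mulVec3R,
          Matrix.vecHead, Matrix.vecTail, hatC, Matrix.smul_apply, Matrix.add_apply,
          Matrix.sub_apply, Matrix.map_apply, Matrix.of_apply, Matrix.cons_val_zero,
          Matrix.cons_val_one, Matrix.head_cons, Matrix.cons_val_two, Matrix.tail_cons,
          Complex.star_def, _root_.map_mul,
          Complex.conj_ofReal, Complex.conj_I, smul_eq_mul, Complex.ofReal_mul, Complex.ofReal_add,
          Complex.ofReal_sub, Complex.ofReal_neg, Complex.ofReal_pow, Complex.ofReal_ofNat,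
          -Complex.ext_iff]
        simp only [← Complex.ofReal_pow]
        rw [Complex.ext_iff]
        constructor <;>
        · simp only [Complex.add_re, Complex.add_im, Complex.sub_re, Complex.sub_im,
            Complex.neg_re, Complex.neg_im, Complex.mul_re, Complex.mul_im, Complex.I_re,
            Complex.I_im, Complex.ofReal_re, Complex.ofReal_im, Complex.re_ofNat,
            Complex.im_ofNat, Complex.one_re, Complex.one_im, Complex.zero_re, Complex.zero_im]
          try simp only [e1, e2, e3, f1, f2, f3, t1, t2]
          ring
end
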